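/- (Lemma, pointwise closeness of log-densities.) Let ρ(x) = e^{−U(x)}/C and ρ̃(x) = e^{−Ũ(x)}/C̃ be probability densities on ℝ^d with normalizing constants C, C̃ > 0, where U and Ũ are differentiable, both satisfy the (m,b)-dissipativity condition, their gradients ∇U and ∇Ũ are L-Lipschitz, and sup_{x ∈ ℝ^d} ‖∇Ũ(x) − ∇U(x)‖ ≤ ε with ε ∈ (0,1]. Then there exists a constant C₀ > 0, depending only on m, b, L, d (but not on ε), such that |log ρ(x) − log ρ̃(x)| ≤ C₀·(ε·‖x‖ + ε) for every x ∈ ℝ^d. -/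

import Mathlib

open MeasureTheory Real RealInnerProductSpace

/-- Euclidean space `ℝ^d`. -/
abbrev Euc (d : ℕ) := EuclideanSpace ℝ (Fin d)

section aux
variable {d : ℕ} {L : ℝ} {U : Euc d → ℝ}

lemma norm_grad_eq (f : Euc d → ℝ) (x : Euc d) : ‖gradient f x‖ = ‖fderiv ℝ f x‖ := by
  rw [gradient]; exact LinearIsometryEquiv.norm_map _ _

lemma fderiv_apply_eq_inner (f : Euc d → ℝ) (x v : Euc d) :
    fderiv ℝ f x v = ⟪gradient f x, v⟫ := by
  rw [gradient, InnerProductSpace.toDual_symm_apply]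

lemma grad_lip_dist (hL : 0 ≤ L)
    (hLip : LipschitzWith (Real.toNNReal L) (fun x => gradient U x)) (x y : Euc d) :
    ‖gradient U x - gradient U y‖ ≤ L * ‖x - y‖ := by
  have := hLip.dist_le_mul x y
  rwa [dist_eq_norm, dist_eq_norm, Real.coe_toNNReal L hL] at this

/-- Taylor-type bound from Lipschitz gradient. -/
lemma taylor_bound (hU : Differentiable ℝ U) (hL : 0 ≤ L)
    (hLip : LipschitzWith (Real.toNNReal L) (fun x => gradient U x)) (x y : Euc d) :
    |U y - U x - ⟪gradient U x, y - x⟫| ≤ L * ‖y - x‖^2 := by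
  have h := (convex_closedBall x ‖y - x‖).norm_image_sub_le_of_norm_fderiv_le' (𝕜 := ℝ) (f := U)
    (s := Metric.closedBall x ‖y - x‖) (φ := fderiv ℝ U x) (C := L * ‖y - x‖) (x := x) (y := y)
    (fun z _ => hU z) ?_ (Metric.mem_closedBall_self (norm_nonneg _))
    (by simp [Metric.mem_closedBall, dist_eq_norm])
  · rw [fderiv_apply_eq_inner] at h
    calc |U y - U x - ⟪gradient U x, y - x⟫| ≤ L * ‖y - x‖ * ‖y - x‖ := h
    _ = L * ‖y - x‖^2 := by ring
  · intro z hz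
    have h1 : ‖fderiv ℝ U z - fderiv ℝ U x‖ = ‖gradient U z - gradient U x‖ := by
      simp only [gradient]
      rw [← map_sub]
      exact (LinearIsometryEquiv.norm_map _ _).symm
    rw [h1]
    calc ‖gradient U z - gradient U x‖ ≤ L * ‖z - x‖ := grad_lip_dist hL hLip z x
    _ ≤ L * ‖y - x‖ := by
        apply mul_le_mul_of_nonneg_left _ hL
        simpa [Metric.mem_closedBall, dist_eq_norm] using hz


variable {m b : ℝ}

/-- Bound on the gradient at the origin. -/
lemma grad_zero_bound (hm : 0 < m) (hb : 0 ≤ b) (hL : 0 ≤ L)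
    (hdis : ∀ x, ⟪x, gradient U x⟫ ≥ m * ‖x‖ ^ 2 - b)
    (hLip : LipschitzWith (Real.toNNReal L) (fun x => gradient U x)) :
    ‖gradient U 0‖ ≤ L + b := by
  by_cases hg : gradient U 0 = 0
  · rw [hg, norm_zero]; positivity
  · set g := gradient U 0 with hgdef
    set x : Euc d := (-(‖g‖)⁻¹) • g with hxdef
    have hnx : ‖x‖ = 1 := by
      rw [hxdef, norm_smul]
      simp [abs_of_nonneg, norm_ne_zero_iff.mpr hg, inv_mul_cancel₀]
    have h1 : ⟪x, gradient U x⟫ ≥ m - b := by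
      have := hdis x
      rwa [hnx, one_pow, mul_one] at this
    have h2 : ⟪x, gradient U x⟫ = ⟪x, g⟫ + ⟪x, gradient U x - g⟫ := by
      rw [← inner_add_right]
      congr 1
      abel
    have h3 : ⟪x, g⟫ = -‖g‖ := by
      have hng : ‖g‖ ≠ 0 := norm_ne_zero_iff.mpr hg
      rw [hxdef, real_inner_smul_left, real_inner_self_eq_norm_sq]
      field_simp
    have h4 : ⟪x, gradient U x - g⟫ ≤ L := by
      calc ⟪x, gradient U x - g⟫ ≤ ‖x‖ * ‖gradient U x - g‖ := real_inner_le_norm _ _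
      _ ≤ 1 * (L * ‖x - 0‖) := by
          apply mul_le_mul (le_of_eq hnx) (grad_lip_dist hL hLip x 0) (norm_nonneg _) zero_le_one
      _ = L := by rw [sub_zero, hnx]; ring
    have h5 : ⟪x, gradient U x⟫ ≤ -‖g‖ + L := by
      rw [h2]; exact add_le_add (le_of_eq h3) h4
    nlinarith [h1, h5]

/-- FTC along the ray through `x`. -/
lemma ftc_ray (hU : Differentiable ℝ U) (hL : 0 ≤ L)
    (hLip : LipschitzWith (Real.toNNReal L) (fun x => gradient U x)) (x : Euc d) (δ : ℝ) :
    U x - U (δ • x) = ∫ t in δ..(1:ℝ), ⟪x, gradient U (t • x)⟫ := by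
  have hcont : Continuous fun t : ℝ => ⟪x, gradient U (t • x)⟫ :=
    continuous_const.inner (hLip.continuous.comp (continuous_id.smul continuous_const))
  have hderiv : ∀ t ∈ Set.uIcc δ (1:ℝ),
      HasDerivAt (fun s : ℝ => U (s • x)) ⟪x, gradient U (t • x)⟫ t := by
    intro t _
    have h1 : HasDerivAt (fun s : ℝ => s • x) ((1:ℝ) • x) t := (hasDerivAt_id t).smul_const x
    rw [one_smul] at h1
    have h2 := ((hU (t • x)).hasFDerivAt).comp_hasDerivAt t h1
    have h3 : fderiv ℝ U (t • x) x = ⟪x, gradient U (t • x)⟫ := by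
      rw [fderiv_apply_eq_inner, real_inner_comm]
    rw [h3] at h2; exact h2
  have := intervalIntegral.integral_eq_sub_of_hasDerivAt hderiv
    (hcont.intervalIntegrable δ 1)
  rw [this, one_smul]

/-- Upper bound on `U`. -/
lemma U_upper (hU : Differentiable ℝ U) (hm : 0 < m) (hb : 0 ≤ b) (hL : 0 ≤ L)
    (hdis : ∀ x, ⟪x, gradient U x⟫ ≥ m * ‖x‖ ^ 2 - b)
    (hLip : LipschitzWith (Real.toNNReal L) (fun x => gradient U x)) (x : Euc d) :
    U x ≤ U 0 + (L + b) * ‖x‖ + L * ‖x‖^2 := by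
  have h := taylor_bound hU hL hLip 0 x
  rw [sub_zero] at h
  have h2 : ⟪gradient U 0, x⟫ ≤ (L + b) * ‖x‖ := by
    calc ⟪gradient U 0, x⟫ ≤ ‖gradient U 0‖ * ‖x‖ := real_inner_le_norm _ _
    _ ≤ (L + b) * ‖x‖ :=
        mul_le_mul_of_nonneg_right (grad_zero_bound hm hb hL hdis hLip) (norm_nonneg _)
  have := abs_le.mp h
  linarith [this.2]

set_option maxHeartbeats 1000000 in
/-- Lower bound on `U`, with constants depending only on `m, b, L`. -/
lemma U_lower (hU : Differentiable ℝ U) (hm : 0 < m) (hb : 0 ≤ b) (hL : 0 ≤ L)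
    (hdis : ∀ x, ⟪x, gradient U x⟫ ≥ m * ‖x‖ ^ 2 - b)
    (hLip : LipschitzWith (Real.toNNReal L) (fun x => gradient U x))
    {δ : ℝ} (hδ0 : 0 < δ) (hδh : δ ≤ 1/2) (hδm : L * δ^2 ≤ m/8) (x : Euc d) :
    U 0 + m/8 * ‖x‖^2 - (2*(L+b)^2/m + b/δ) ≤ U x := by
  set r := ‖x‖ with hr
  have hr0 : 0 ≤ r := norm_nonneg _
  -- FTC part
  have hftc := ftc_ray hU hL hLip x δ
  -- pointwise bound on the derivative
  have hpt : ∀ t ∈ Set.Icc δ (1:ℝ), m*r^2*t - b/δ ≤ ⟪x, gradient U (t • x)⟫ := by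
    intro t ht
    have ht0 : 0 < t := lt_of_lt_of_le hδ0 ht.1
    have hds := hdis (t • x)
    rw [real_inner_smul_left, norm_smul, Real.norm_eq_abs, abs_of_pos ht0] at hds
    have hbt : b * δ ≤ b * t := mul_le_mul_of_nonneg_left ht.1 hb
    have hb1 : b / δ * δ = b := div_mul_cancel₀ b (ne_of_gt hδ0)
    -- t * ⟪x, grad⟫ ≥ m * (t*r)^2 - b ; want ⟪x,grad⟫ ≥ m r² t - b/δ
    have key : t * (m*r^2*t - b/δ) ≤ t * ⟪x, gradient U (t • x)⟫ := by
      calc t * (m*r^2*t - b/δ) = m * (t*r)^2 - (b/δ)*t := by ring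
      _ ≤ m * (t*r)^2 - b := by
          have : b ≤ (b/δ)*t := by
            rw [div_mul_eq_mul_div, le_div_iff₀ hδ0]
            linarith [hbt]
          linarith
      _ ≤ t * ⟪x, gradient U (t • x)⟫ := hds
    exact le_of_mul_le_mul_left key ht0
  -- integral comparison
  have hint1 : IntervalIntegrable (fun t : ℝ => m*r^2*t - b/δ) volume δ 1 :=
    ((continuous_const.mul continuous_id).sub continuous_const).intervalIntegrable δ 1
  have hint2 : IntervalIntegrable (fun t : ℝ => ⟪x, gradient U (t • x)⟫) volume δ 1 :=
    (continuous_const.inner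
      (hLip.continuous.comp (continuous_id.smul continuous_const))).intervalIntegrable δ 1
  have hδ1 : δ ≤ 1 := le_trans hδh (by norm_num)
  have hmono := intervalIntegral.integral_mono_on hδ1 hint1 hint2 hpt
  -- compute the lower integral
  have hcomp : (∫ t in δ..(1:ℝ), (m*r^2*t - b/δ))
      = m*r^2*((1 - δ^2)/2) - (b/δ)*(1-δ) := by
    have hc1 : Continuous fun t : ℝ => m*r^2*t := by continuity
    rw [intervalIntegral.integral_sub (hc1.intervalIntegrable δ 1)
      (intervalIntegrable_const), intervalIntegral.integral_const_mul, integral_id,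
      intervalIntegral.integral_const]
    simp only [smul_eq_mul]
    ring
  -- Taylor bound at δ • x
  have htay := taylor_bound hU hL hLip 0 (δ • x)
  rw [sub_zero] at htay
  have hnδx : ‖δ • x‖ = δ * r := by rw [norm_smul, Real.norm_eq_abs, abs_of_pos hδ0]
  have hinner : ⟪gradient U 0, δ • x⟫ ≥ -((L+b) * (δ*r)) := by
    have h1 : |⟪gradient U 0, δ • x⟫| ≤ ‖gradient U 0‖ * ‖δ • x‖ := abs_real_inner_le_norm _ _
    have h2 : ‖gradient U 0‖ * ‖δ • x‖ ≤ (L+b) * (δ*r) := by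
      rw [hnδx]
      exact mul_le_mul_of_nonneg_right (grad_zero_bound hm hb hL hdis hLip)
        (by positivity)
    have := abs_le.mp (h1.trans h2)
    linarith [this.1]
  have hUδx : U 0 - (L+b)*(δ*r) - L*(δ*r)^2 ≤ U (δ • x) := by
    have := (abs_le.mp htay).1
    rw [hnδx] at this
    linarith
  -- combine
  have hδsq : δ^2 ≤ 1/4 := by nlinarith
  have A1 : (L+b)*(δ*r) ≤ (L+b)*r := by
    have h0 : 0 ≤ (L+b)*r*(1-δ) :=
      mul_nonneg (mul_nonneg (add_nonneg hL hb) hr0) (by linarith)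
    nlinarith [h0]
  have A2 : L*(δ*r)^2 ≤ m/8*r^2 := by
    calc L*(δ*r)^2 = (L*δ^2)*r^2 := by ring
    _ ≤ m/8*r^2 := mul_le_mul_of_nonneg_right hδm (sq_nonneg r)
  have A3 : m*r^2*(3/8) ≤ m*r^2*((1-δ^2)/2) :=
    mul_le_mul_of_nonneg_left (by linarith) (by positivity)
  have A4 : (b/δ)*(1-δ) ≤ b/δ := by
    have h0 : (b/δ)*(1-δ) ≤ (b/δ)*1 := mul_le_mul_of_nonneg_left (by linarith) (by positivity)
    linarith
  have A5 : (L+b)*r ≤ m/8*r^2 + 2*(L+b)^2/m := by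
    have key : 0 ≤ m * ((m/8*r^2 + 2*(L+b)^2/m) - (L+b)*r) := by
      have h8 : 2*(L+b)^2/m*m = 2*(L+b)^2 := div_mul_cancel₀ _ (ne_of_gt hm)
      nlinarith [sq_nonneg (m*r - 4*(L+b))]
    have h2 := (mul_nonneg_iff_of_pos_left hm).mp key
    linarith
  have hIneq : m*r^2*((1 - δ^2)/2) - (b/δ)*(1-δ) ≤ U x - U (δ • x) := by
    rw [hftc, ← hcomp]; exact hmono
  linarith [hIneq, hUδx, A1, A2, A3, A4, A5]

lemma norm_grad_sub (f g : Euc d → ℝ) (z : Euc d) :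
    ‖gradient f z - gradient g z‖ = ‖fderiv ℝ f z - fderiv ℝ g z‖ := by
  simp only [gradient, ← map_sub]
  exact LinearIsometryEquiv.norm_map _ _

/-- Integrability of the gaussian profile on `Euc d`. -/
lemma integrable_gauss (c : ℝ) (hc : 0 < c) :
    Integrable (fun x : Euc d => Real.exp (-c * ‖x‖^2)) := by
  have h := (GaussianFourier.integrable_cexp_neg_mul_sq_norm_add (b := (c:ℂ))
    (by simpa using hc) 0 (0 : Euc d)).norm
  have heq : ∀ x : Euc d, ‖Complex.exp (-(c:ℂ) * ‖x‖^2 + 0 * (inner ℝ (0:Euc d) x : ℝ))‖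
      = Real.exp (-c * ‖x‖^2) := by
    intro x
    simp [Complex.norm_exp, ← Complex.ofReal_pow]
  exact h.congr (Filter.Eventually.of_forall heq)

/-- Integrability of the base dominating profile. -/
lemma integrable_base {a : ℝ} (ha : 0 < a) :
    Integrable (fun x : Euc d => Real.exp (2*‖x‖ - a*‖x‖^2)) := by
  apply Integrable.mono' ((integrable_gauss (a/2) (by positivity)).const_mul (Real.exp (2/a)))
  · exact (Continuous.rexp (by continuity)).aestronglyMeasurable
  · refine Filter.Eventually.of_forall fun x => ?_
    rw [Real.norm_eq_abs, abs_of_pos (Real.exp_pos _), ← Real.exp_add]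
    apply Real.exp_le_exp.mpr
    have hua : (2/a)*a = 2 := div_mul_cancel₀ _ (ne_of_gt ha)
    nlinarith [sq_nonneg (a*‖x‖ - 2), ha, sq_nonneg ‖x‖]

/-- Lower bound for an integral via a constant lower bound on the unit ball. -/
lemma integral_ge_ball (f : Euc d → ℝ) (hf : Integrable f) (hnn : ∀ x, 0 ≤ f x) (c : ℝ)
    (hc : ∀ x ∈ Metric.ball (0:Euc d) 1, c ≤ f x) :
    c * (volume (Metric.ball (0:Euc d) 1)).toReal ≤ ∫ x, f x := by
  have h1 : c * (volume (Metric.ball (0:Euc d) 1)).toReal ≤ ∫ x in Metric.ball (0:Euc d) 1, f x :=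
    by have h := setIntegral_ge_of_const_le measurableSet_ball measure_ball_lt_top.ne hc hf.integrableOn
       rw [smul_eq_mul, measureReal_def, mul_comm] at h; exact h
  have h2 : ∫ x in Metric.ball (0:Euc d) 1, f x ≤ ∫ x, f x :=
    setIntegral_le_integral hf (Filter.Eventually.of_forall hnn)
  linarith

end aux

set_option maxHeartbeats 2000000 in
/-- Lemma: pointwise closeness of log-densities. The constant `C₀` depends only on
`m, b, L, d`, not on `ε`. -/
theorem log_density_pointwise_closeness
    (d : ℕ) (hd : 1 ≤ d) (m b L : ℝ) (hm : 0 < m) (hb : 0 ≤ b) (hL : 0 ≤ L) :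
    ∃ C₀ : ℝ, 0 < C₀ ∧
      ∀ (ε : ℝ), 0 < ε → ε ≤ 1 →
      ∀ (U Ut : Euc d → ℝ) (Cn Ctn : ℝ), 0 < Cn → 0 < Ctn →
      Differentiable ℝ U → Differentiable ℝ Ut →
      -- `ρ = e^{-U}/C` and `ρ̃ = e^{-Ũ}/C̃` are probability densities
      ((∫ x, Real.exp (-(U x)) / Cn) = 1) →
      ((∫ x, Real.exp (-(Ut x)) / Ctn) = 1) →
      -- `(m,b)`-dissipativity of `U` and `Ũ`
      (∀ x, ⟪x, gradient U x⟫ ≥ m * ‖x‖ ^ 2 - b) →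
      (∀ x, ⟪x, gradient Ut x⟫ ≥ m * ‖x‖ ^ 2 - b) →
      -- `L`-Lipschitz gradients
      LipschitzWith (Real.toNNReal L) (fun x => gradient U x) →
      LipschitzWith (Real.toNNReal L) (fun x => gradient Ut x) →
      -- `ε`-closeness of the gradients
      (∀ x, ‖gradient Ut x - gradient U x‖ ≤ ε) →
      ∀ x, |Real.log (Real.exp (-(U x)) / Cn) - Real.log (Real.exp (-(Ut x)) / Ctn)| ≤
        C₀ * (ε * ‖x‖ + ε) := by
  -- the universal constants
  set δ : ℝ := min (1/2) (Real.sqrt (m / (8*(L+1)))) with hδdef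
  have hδ0 : 0 < δ := lt_min (by norm_num) (Real.sqrt_pos.mpr (by positivity))
  have hδh : δ ≤ 1/2 := min_le_left _ _
  have hδm : L * δ^2 ≤ m/8 := by
    have h1 : δ^2 ≤ m/(8*(L+1)) := by
      calc δ^2 ≤ (Real.sqrt (m/(8*(L+1))))^2 :=
            pow_le_pow_left₀ hδ0.le (min_le_right _ _) 2
      _ = m/(8*(L+1)) := Real.sq_sqrt (by positivity)
    calc L * δ^2 ≤ L * (m/(8*(L+1))) := mul_le_mul_of_nonneg_left h1 hL
    _ ≤ m/8 := by
        rw [show L * (m/(8*(L+1))) = (L*m)/(8*(L+1)) by ring,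
          div_le_div_iff₀ (by positivity) (by norm_num)]
        nlinarith
  set c₅ : ℝ := 2*(L+b)^2/m + b/δ with hc₅def
  set γ : ℝ := (volume (Metric.ball (0:Euc d) 1)).toReal * Real.exp (-((L+b) + L + 1)) with hγdef
  have hvol : 0 < (volume (Metric.ball (0:Euc d) 1)).toReal :=
    ENNReal.toReal_pos (Metric.measure_ball_pos volume _ one_pos).ne' measure_ball_lt_top.ne
  have hγ0 : 0 < γ := mul_pos hvol (Real.exp_pos _)
  set M : ℝ := Real.exp c₅ * ∫ x : Euc d, Real.exp (2*‖x‖ - m/8*‖x‖^2) with hMdef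
  have hM0 : 0 ≤ M := by
    apply mul_nonneg (Real.exp_pos _).le
    exact integral_nonneg fun x => (Real.exp_pos _).le
  refine ⟨1 + M/γ, by positivity, ?_⟩
  intro ε hε hε1 U Ut Cn Ctn hCn hCtn hU hUt hIU hIUt hdisU hdisUt hLipU hLipUt hgrad
  -- normalizing constants are the integrals
  have hCnI : Cn = ∫ y, Real.exp (-(U y)) := by
    rw [integral_div] at hIU
    exact ((div_eq_one_iff_eq (ne_of_gt hCn)).mp hIU).symm
  have hCtnI : Ctn = ∫ y, Real.exp (-(Ut y)) := by
    rw [integral_div] at hIUt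
    exact ((div_eq_one_iff_eq (ne_of_gt hCtn)).mp hIUt).symm
  -- closeness of the potentials along rays
  have h1 : ∀ y : Euc d, |(Ut y - U y) - (Ut 0 - U 0)| ≤ ε * ‖y‖ := by
    intro y
    have hdg : ∀ z ∈ (Set.univ : Set (Euc d)), ‖fderiv ℝ (fun w => Ut w - U w) z‖ ≤ ε := by
      intro z _
      rw [fderiv_fun_sub (hUt z) (hU z), ← norm_grad_sub]
      exact hgrad z
    have h := convex_univ.norm_image_sub_le_of_norm_fderiv_le
      (fun z _ => ((hUt z).sub (hU z))) hdg (Set.mem_univ (0 : Euc d)) (Set.mem_univ y)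
    simpa [Real.norm_eq_abs, sub_zero] using h
  -- bounds on U
  have hlowU : ∀ y : Euc d, U 0 + m/8*‖y‖^2 - c₅ ≤ U y :=
    fun y => U_lower hU hm hb hL hdisU hLipU hδ0 hδh hδm y
  have hupU : ∀ y : Euc d, U y ≤ U 0 + (L + b) * ‖y‖ + L * ‖y‖^2 :=
    fun y => U_upper hU hm hb hL hdisU hLipU y
  -- dominating function
  have hbase : Integrable (fun y : Euc d => Real.exp (2*‖y‖ - m/8*‖y‖^2)) :=
    integrable_base (by positivity)
  have hdomI : Integrable
      (fun y : Euc d => Real.exp (-(U 0) + c₅) * Real.exp (2*‖y‖ - m/8*‖y‖^2)) :=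
    hbase.const_mul _
  have hdom : ∀ (s : ℝ), |s| ≤ 2 → ∀ y : Euc d, Real.exp (-(U y) + s*‖y‖) ≤
      Real.exp (-(U 0) + c₅) * Real.exp (2*‖y‖ - m/8*‖y‖^2) := by
    intro s hs y
    rw [← Real.exp_add]
    apply Real.exp_le_exp.mpr
    have h2 : s*‖y‖ ≤ 2*‖y‖ := by
      calc s*‖y‖ ≤ |s| * ‖y‖ := mul_le_mul_of_nonneg_right (le_abs_self s) (norm_nonneg y)
      _ ≤ 2*‖y‖ := mul_le_mul_of_nonneg_right hs (norm_nonneg y)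
    linarith [hlowU y]
  -- integrability of all relevant functions
  have hcU : Continuous U := hU.continuous
  have IU : Integrable (fun y : Euc d => Real.exp (-(U y))) := by
    apply hdomI.mono' (Continuous.aestronglyMeasurable hcU.neg.rexp)
    refine Filter.Eventually.of_forall fun y => ?_
    rw [Real.norm_eq_abs, abs_of_pos (Real.exp_pos _)]
    simpa using hdom 0 (by norm_num) y
  have IJ : Integrable (fun y : Euc d => Real.exp (-(U y) + (-ε)*‖y‖)) := by
    apply hdomI.mono' (Continuous.aestronglyMeasurable
      ((hcU.neg.add (continuous_const.mul continuous_norm)).rexp))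
    refine Filter.Eventually.of_forall fun y => ?_
    rw [Real.norm_eq_abs, abs_of_pos (Real.exp_pos _)]
    exact hdom (-ε) (by rw [abs_neg, abs_of_pos hε]; linarith) y
  have IP : Integrable (fun y : Euc d => Real.exp (-(U y) + ε*‖y‖)) := by
    apply hdomI.mono' (Continuous.aestronglyMeasurable
      ((hcU.neg.add (continuous_const.mul continuous_norm)).rexp))
    refine Filter.Eventually.of_forall fun y => ?_
    rw [Real.norm_eq_abs, abs_of_pos (Real.exp_pos _)]
    exact hdom ε (by rw [abs_of_pos hε]; linarith) y
  have IK : Integrable (fun y : Euc d => ‖y‖ * Real.exp (-(U y) + ‖y‖)) := by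
    apply hdomI.mono' (Continuous.aestronglyMeasurable
      (continuous_norm.mul ((hcU.neg.add continuous_norm).rexp)))
    refine Filter.Eventually.of_forall fun y => ?_
    show ‖‖y‖ * Real.exp (-(U y) + ‖y‖)‖ ≤ _
    rw [Real.norm_eq_abs, abs_of_nonneg (by positivity : (0:ℝ) ≤ ‖y‖ * Real.exp (-(U y) + ‖y‖))]
    calc ‖y‖ * Real.exp (-(U y) + ‖y‖) ≤ Real.exp ‖y‖ * Real.exp (-(U y) + ‖y‖) :=
        mul_le_mul_of_nonneg_right (by linarith [Real.add_one_le_exp ‖y‖]) (Real.exp_pos _).le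
    _ = Real.exp (-(U y) + 2*‖y‖) := by rw [← Real.exp_add]; congr 1; ring
    _ ≤ _ := hdom 2 (by norm_num) y
  have hUtle : ∀ y : Euc d, Real.exp (-(Ut y)) ≤
      Real.exp (-(Ut 0 - U 0)) * Real.exp (-(U y) + ε*‖y‖) := by
    intro y
    rw [← Real.exp_add]
    apply Real.exp_le_exp.mpr
    have := (abs_le.mp (h1 y)).1
    linarith
  have hUtge : ∀ y : Euc d, Real.exp (-(Ut 0 - U 0)) * Real.exp (-(U y) + (-ε)*‖y‖) ≤
      Real.exp (-(Ut y)) := by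
    intro y
    rw [← Real.exp_add]
    apply Real.exp_le_exp.mpr
    have := (abs_le.mp (h1 y)).2
    have hh : (-ε)*‖y‖ = -(ε*‖y‖) := by ring
    rw [hh]
    linarith
  have IUt : Integrable (fun y : Euc d => Real.exp (-(Ut y))) := by
    apply (IP.const_mul (Real.exp (-(Ut 0 - U 0)))).mono'
      (Continuous.aestronglyMeasurable hUt.continuous.neg.rexp)
    refine Filter.Eventually.of_forall fun y => ?_
    rw [Real.norm_eq_abs, abs_of_pos (Real.exp_pos _)]
    exact hUtle y
  -- the four integrals
  set I : ℝ := ∫ y : Euc d, Real.exp (-(U y)) with hIdef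
  set J : ℝ := ∫ y : Euc d, Real.exp (-(U y) + (-ε)*‖y‖) with hJdef
  set P : ℝ := ∫ y : Euc d, Real.exp (-(U y) + ε*‖y‖) with hPdef
  set K : ℝ := ∫ y : Euc d, ‖y‖ * Real.exp (-(U y) + ‖y‖) with hKdef
  have hI0 : 0 < I := hCnI ▸ hCn
  have hK0 : 0 ≤ K := integral_nonneg fun y => by positivity
  -- pointwise comparisons leading to the integral estimates
  have hexpfact : ∀ y : Euc d, Real.exp (ε*‖y‖) ≤ 1 + (ε*‖y‖) * Real.exp ‖y‖ := by
    intro y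
    have hs0 : 0 ≤ ε*‖y‖ := by positivity
    have hmul : Real.exp (-(ε*‖y‖)) * Real.exp (ε*‖y‖) = 1 := by
      rw [← Real.exp_add]; simp
    have h2 : Real.exp (ε*‖y‖) - 1 ≤ (ε*‖y‖) * Real.exp (ε*‖y‖) := by
      nlinarith [Real.add_one_le_exp (-(ε*‖y‖)), Real.exp_pos (ε*‖y‖)]
    have h3 : Real.exp (ε*‖y‖) ≤ Real.exp ‖y‖ := by
      apply Real.exp_le_exp.mpr
      nlinarith [norm_nonneg y]
    nlinarith [Real.exp_pos (ε*‖y‖)]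
  have hPpt : ∀ y : Euc d, Real.exp (-(U y) + ε*‖y‖) ≤
      Real.exp (-(U y)) + ε * (‖y‖ * Real.exp (-(U y) + ‖y‖)) := by
    intro y
    calc Real.exp (-(U y) + ε*‖y‖) = Real.exp (-(U y)) * Real.exp (ε*‖y‖) := Real.exp_add _ _
    _ ≤ Real.exp (-(U y)) * (1 + (ε*‖y‖) * Real.exp ‖y‖) :=
        mul_le_mul_of_nonneg_left (hexpfact y) (Real.exp_pos _).le
    _ = Real.exp (-(U y)) + ε * (‖y‖ * (Real.exp (-(U y)) * Real.exp ‖y‖)) := by ring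
    _ = Real.exp (-(U y)) + ε * (‖y‖ * Real.exp (-(U y) + ‖y‖)) := by rw [← Real.exp_add]
  have hIpt : ∀ y : Euc d, Real.exp (-(U y)) ≤
      Real.exp (-(U y) + (-ε)*‖y‖) + ε * (‖y‖ * Real.exp (-(U y) + ‖y‖)) := by
    intro y
    have h5 : 1 - Real.exp (-(ε*‖y‖)) ≤ ε*‖y‖ := by linarith [Real.add_one_le_exp (-(ε*‖y‖))]
    have e3 : Real.exp (-(U y) + (-ε)*‖y‖) = Real.exp (-(U y)) * Real.exp (-(ε*‖y‖)) := by
      rw [← Real.exp_add]; congr 1; ring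
    have e2 : Real.exp (-(U y) + ‖y‖) = Real.exp (-(U y)) * Real.exp ‖y‖ := Real.exp_add _ _
    rw [e3, e2]
    have h6 : Real.exp (-(U y)) * (1 - Real.exp (-(ε*‖y‖))) ≤ Real.exp (-(U y)) * (ε*‖y‖) :=
      mul_le_mul_of_nonneg_left h5 (Real.exp_pos _).le
    have h7 : (1:ℝ) ≤ Real.exp ‖y‖ := Real.one_le_exp (norm_nonneg y)
    nlinarith [Real.exp_pos (-(U y)), mul_nonneg (mul_nonneg hε.le (norm_nonneg y))
      (Real.exp_pos (-(U y))).le]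
  have hP_le : P ≤ I + ε*K := by
    have h := integral_mono IP (IU.add (IK.const_mul ε)) hPpt
    simp only [Pi.add_apply] at h
    rwa [integral_add IU (IK.const_mul ε), integral_const_mul] at h
  have hI_le : I ≤ J + ε*K := by
    have h := integral_mono IU (IJ.add (IK.const_mul ε)) hIpt
    simp only [Pi.add_apply] at h
    rwa [integral_add IJ (IK.const_mul ε), integral_const_mul] at h
  have hJP : J ≤ P := by
    apply integral_mono IJ IP
    intro y
    apply Real.exp_le_exp.mpr
    have : (0:ℝ) ≤ ε*‖y‖ := by positivity
    nlinarith
  have hCtn_le : Ctn ≤ Real.exp (-(Ut 0 - U 0)) * P := by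
    rw [hCtnI]
    calc (∫ y, Real.exp (-(Ut y)))
        ≤ ∫ y, Real.exp (-(Ut 0 - U 0)) * Real.exp (-(U y) + ε*‖y‖) :=
          integral_mono IUt (IP.const_mul _) hUtle
    _ = Real.exp (-(Ut 0 - U 0)) * P := integral_const_mul _ _
  have hCtn_ge : Real.exp (-(Ut 0 - U 0)) * J ≤ Ctn := by
    rw [hCtnI]
    calc Real.exp (-(Ut 0 - U 0)) * J
        = ∫ y, Real.exp (-(Ut 0 - U 0)) * Real.exp (-(U y) + (-ε)*‖y‖) :=
          (integral_const_mul _ _).symm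
    _ ≤ ∫ y, Real.exp (-(Ut y)) := integral_mono (IJ.const_mul _) IUt hUtge
  -- lower bounds for I and J via the unit ball
  have hball : ∀ y : Euc d, y ∈ Metric.ball (0:Euc d) 1 → U y ≤ U 0 + ((L+b) + L) := by
    intro y hy
    have hy1 : ‖y‖ ≤ 1 := le_of_lt (mem_ball_zero_iff.mp hy)
    have hsq : ‖y‖^2 ≤ 1 := by nlinarith [norm_nonneg y]
    have h := hupU y
    nlinarith [norm_nonneg y, add_nonneg hL hb]
  have hIγ : Real.exp (-(U 0)) * γ ≤ I := by
    have hc : ∀ y ∈ Metric.ball (0:Euc d) 1,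
        Real.exp (-(U 0) - ((L+b) + L + 1)) ≤ Real.exp (-(U y)) := by
      intro y hy
      apply Real.exp_le_exp.mpr
      linarith [hball y hy]
    have h := integral_ge_ball _ IU (fun y => (Real.exp_pos _).le) _ hc
    calc Real.exp (-(U 0)) * γ
        = Real.exp (-(U 0) - ((L+b) + L + 1)) * (volume (Metric.ball (0:Euc d) 1)).toReal := by
          rw [hγdef, show (-(U 0) - ((L+b) + L + 1)) = (-(U 0)) + (-((L+b) + L + 1)) by ring,
            Real.exp_add]
          ring
    _ ≤ I := h
  have hJγ : Real.exp (-(U 0)) * γ ≤ J := by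
    have hc : ∀ y ∈ Metric.ball (0:Euc d) 1,
        Real.exp (-(U 0) - ((L+b) + L + 1)) ≤ Real.exp (-(U y) + (-ε)*‖y‖) := by
      intro y hy
      apply Real.exp_le_exp.mpr
      have hy1 : ‖y‖ ≤ 1 := le_of_lt (mem_ball_zero_iff.mp hy)
      have hεy : ε*‖y‖ ≤ 1 := by nlinarith [norm_nonneg y]
      have : (-ε)*‖y‖ = -(ε*‖y‖) := by ring
      rw [this]
      linarith [hball y hy]
    have h := integral_ge_ball _ IJ (fun y => (Real.exp_pos _).le) _ hc
    calc Real.exp (-(U 0)) * γ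
        = Real.exp (-(U 0) - ((L+b) + L + 1)) * (volume (Metric.ball (0:Euc d) 1)).toReal := by
          rw [hγdef, show (-(U 0) - ((L+b) + L + 1)) = (-(U 0)) + (-((L+b) + L + 1)) by ring,
            Real.exp_add]
          ring
    _ ≤ J := h
  have hJ0 : 0 < J := lt_of_lt_of_le (by positivity) hJγ
  have hP0 : 0 < P := lt_of_lt_of_le hJ0 hJP
  -- K is controlled by M
  have hKM : K ≤ Real.exp (-(U 0)) * M := by
    have hKpt : ∀ y : Euc d, ‖y‖ * Real.exp (-(U y) + ‖y‖) ≤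
        Real.exp (-(U 0)) * (Real.exp c₅ * Real.exp (2*‖y‖ - m/8*‖y‖^2)) := by
      intro y
      calc ‖y‖ * Real.exp (-(U y) + ‖y‖) ≤ Real.exp ‖y‖ * Real.exp (-(U y) + ‖y‖) :=
          mul_le_mul_of_nonneg_right (by linarith [Real.add_one_le_exp ‖y‖]) (Real.exp_pos _).le
      _ = Real.exp (-(U y) + 2*‖y‖) := by rw [← Real.exp_add]; congr 1; ring
      _ ≤ Real.exp ((-(U 0)) + (c₅ + (2*‖y‖ - m/8*‖y‖^2))) := by
          apply Real.exp_le_exp.mpr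
          linarith [hlowU y]
      _ = Real.exp (-(U 0)) * (Real.exp c₅ * Real.exp (2*‖y‖ - m/8*‖y‖^2)) := by
          rw [Real.exp_add, Real.exp_add]
    have h := integral_mono IK ((hbase.const_mul _).const_mul _) hKpt
    rwa [integral_const_mul, integral_const_mul, ← hMdef] at h
  have hdiv : ∀ X : ℝ, 0 < X → Real.exp (-(U 0)) * γ ≤ X → K/X ≤ M/γ := by
    intro X hX hXγ
    rw [div_le_div_iff₀ hX hγ0]
    have h1 : K*γ ≤ (Real.exp (-(U 0))*M)*γ := mul_le_mul_of_nonneg_right hKM hγ0.le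
    have h2 : (Real.exp (-(U 0))*γ)*M ≤ X*M := mul_le_mul_of_nonneg_right hXγ hM0
    nlinarith
  -- the two log estimates
  have step1 : Real.log Ctn ≤ -(Ut 0 - U 0) + Real.log I + ε*(M/γ) := by
    have l1 : Real.log Ctn ≤ Real.log (Real.exp (-(Ut 0 - U 0)) * (I + ε*K)) := by
      apply Real.log_le_log hCtn
      calc Ctn ≤ Real.exp (-(Ut 0 - U 0)) * P := hCtn_le
      _ ≤ Real.exp (-(Ut 0 - U 0)) * (I + ε*K) :=
          mul_le_mul_of_nonneg_left hP_le (Real.exp_pos _).le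
    have l2 : Real.log (Real.exp (-(Ut 0 - U 0)) * (I + ε*K))
        = -(Ut 0 - U 0) + Real.log (I + ε*K) := by
      rw [Real.log_mul (Real.exp_ne_zero _) (by positivity), Real.log_exp]
    have l3 : Real.log (I + ε*K) ≤ Real.log I + ε*(K/I) := by
      have e : Real.log (I + ε*K) - Real.log I = Real.log ((I + ε*K)/I) :=
        (Real.log_div (by positivity) (ne_of_gt hI0)).symm
      have h4 := Real.log_le_sub_one_of_pos (show 0 < (I+ε*K)/I by positivity)
      have h5 : (I + ε*K)/I - 1 = ε*(K/I) := by field_simp; ring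
      linarith
    have l4 : ε*(K/I) ≤ ε*(M/γ) := mul_le_mul_of_nonneg_left (hdiv I hI0 hIγ) hε.le
    linarith
  have step2 : Real.log I ≤ (Ut 0 - U 0) + Real.log Ctn + ε*(M/γ) := by
    have l1 : Real.log I ≤ Real.log (J + ε*K) :=
      Real.log_le_log hI0 hI_le
    have l3 : Real.log (J + ε*K) ≤ Real.log J + ε*(K/J) := by
      have e : Real.log (J + ε*K) - Real.log J = Real.log ((J + ε*K)/J) :=
        (Real.log_div (by positivity) (ne_of_gt hJ0)).symm
      have h4 := Real.log_le_sub_one_of_pos (show 0 < (J+ε*K)/J by positivity)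
      have h5 : (J + ε*K)/J - 1 = ε*(K/J) := by field_simp; ring
      linarith
    have l5 : Real.log J ≤ (Ut 0 - U 0) + Real.log Ctn := by
      have hJle : J ≤ Real.exp (Ut 0 - U 0) * Ctn := by
        have h := mul_le_mul_of_nonneg_left hCtn_ge (Real.exp_pos (Ut 0 - U 0)).le
        rw [← mul_assoc, ← Real.exp_add] at h
        simpa using h
      calc Real.log J ≤ Real.log (Real.exp (Ut 0 - U 0) * Ctn) := Real.log_le_log hJ0 hJle
      _ = (Ut 0 - U 0) + Real.log Ctn := by
          rw [Real.log_mul (Real.exp_ne_zero _) (ne_of_gt hCtn), Real.log_exp]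
    have l4 : ε*(K/J) ≤ ε*(M/γ) := mul_le_mul_of_nonneg_left (hdiv J hJ0 hJγ) hε.le
    linarith
  -- final pointwise bound
  intro x
  rw [Real.log_div (Real.exp_ne_zero _) (ne_of_gt hCn),
    Real.log_div (Real.exp_ne_zero _) (ne_of_gt hCtn), Real.log_exp, Real.log_exp]
  have habs : |(Ut x - U x) - (Ut 0 - U 0)| ≤ ε*‖x‖ := h1 x
  have h6 : |(Ut 0 - U 0) + Real.log Ctn - Real.log I| ≤ ε*(M/γ) :=
    abs_le.mpr ⟨by linarith [step2], by linarith [step1]⟩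
  have hcomb : |(-(U x) - Real.log Cn) - (-(Ut x) - Real.log Ctn)| ≤ ε*‖x‖ + ε*(M/γ) := by
    rw [hCnI]
    have e : (-(U x) - Real.log I) - (-(Ut x) - Real.log Ctn)
        = ((Ut x - U x) - (Ut 0 - U 0)) + ((Ut 0 - U 0) + Real.log Ctn - Real.log I) := by ring
    rw [e]
    calc |((Ut x - U x) - (Ut 0 - U 0)) + ((Ut 0 - U 0) + Real.log Ctn - Real.log I)|
        ≤ |(Ut x - U x) - (Ut 0 - U 0)| + |(Ut 0 - U 0) + Real.log Ctn - Real.log I| :=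
          abs_add_le _ _
    _ ≤ ε*‖x‖ + ε*(M/γ) := add_le_add habs h6
  calc |(-(U x) - Real.log Cn) - (-(Ut x) - Real.log Ctn)| ≤ ε*‖x‖ + ε*(M/γ) := hcomb
  _ ≤ (1 + M/γ) * (ε*‖x‖ + ε) := by
      have hMγ0 : 0 ≤ M/γ := div_nonneg hM0 hγ0.le
      nlinarith [mul_nonneg hMγ0 (mul_nonneg hε.le (norm_nonneg x)), hε.le, norm_nonneg x]
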